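/- A set A ⊆ ℕ is dynamically thick if and only if for every B ⊆ ℕ with A ⊆ B and B ≠ ℕ there exists a finite set F ⊆ ℕ \ B such that the set B − F is thick. -/

import Mathlib

/-- The set `A - n`, difference taken inside the positive integers:
`A - n = {m : m >= 1 and m + n ∈ A}`. -/
def NSub (A : Set ℕ) (n : ℕ) : Set ℕ := {m : ℕ | 0 < m ∧ m + n ∈ A}

/-- `S ⊆ ℕ` is thick if every finite subset of `ℕ` has a translate inside `S`. -/
def Thick (S : Set ℕ) : Prop :=
  ∀ F : Finset ℕ, ∃ n : ℕ, 0 < n ∧ ∀ f ∈ F, f + n ∈ S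

/-- A topological dynamical system: a nonempty compact metric space together with a
continuous self-map. -/
structure MetricDynSystem where
  carrier : Type
  [metric : MetricSpace carrier]
  [cpt : CompactSpace carrier]
  [carrier_nonempty : Nonempty carrier]
  map : carrier → carrier
  continuous_map : Continuous map

attribute [instance] MetricDynSystem.metric MetricDynSystem.cpt MetricDynSystem.carrier_nonempty

/-- A system is minimal if every point has dense forward orbit `{T^n x : n ∈ ℕ}`. -/
def MetricDynSystem.Minimal (S : MetricDynSystem) : Prop :=
  ∀ x : S.carrier, Dense {y : S.carrier | ∃ n : ℕ, 0 < n ∧ S.map^[n] x = y}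

/-- `A` is dynamically thick: for every minimal system, every point `x` and every
nonempty open `U`, some `n ∈ A` has `T^n x ∈ U`. -/
def DynThick (A : Set ℕ) : Prop :=
  ∀ S : MetricDynSystem, S.Minimal →
    ∀ (x : S.carrier) (U : Set S.carrier), IsOpen U → U.Nonempty →
      ∃ n ∈ A, 0 < n ∧ S.map^[n] x ∈ U


theorem easy_dir (A : Set ℕ)
    (h : ∀ B : Set ℕ, A ⊆ B → B ≠ Set.univ →
        ∃ F : Finset ℕ, (∀ f ∈ F, f ∉ B) ∧ Thick (⋃ f ∈ F, NSub B f)) :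
    DynThick A := by
  intro S hmin x U hU hUne
  obtain ⟨y, hy, hyU⟩ := (hmin x).exists_mem_open hU hUne
  obtain ⟨n₀, hn₀pos, hn₀⟩ := hy
  by_cases hn₀A : n₀ ∈ A
  · exact ⟨n₀, hn₀A, hn₀pos, by rwa [hn₀]⟩
  set B : Set ℕ := {n | n ∈ A ∨ ¬(0 < n ∧ S.map^[n] x ∈ U)} with hB
  have hAB : A ⊆ B := fun a ha => Or.inl ha
  have hBu : B ≠ Set.univ := by
    intro huniv
    have : n₀ ∈ B := huniv ▸ Set.mem_univ n₀
    rcases this with h1 | h2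
    · exact hn₀A h1
    · exact h2 ⟨hn₀pos, by rwa [hn₀]⟩
  obtain ⟨F, hF, hThick⟩ := h B hAB hBu
  have hFprop : ∀ f ∈ F, 0 < f ∧ S.map^[f] x ∈ U := by
    intro f hf
    have := hF f hf
    rw [hB] at this
    simp only [Set.mem_setOf_eq] at this
    push_neg at this
    exact this.2
  -- V := common preimage
  set V : Set S.carrier := ⋂ f ∈ F, (S.map^[f]) ⁻¹' U with hV
  have hVopen : IsOpen V := by
    apply isOpen_biInter_finset
    intro f _
    exact (hU.preimage (S.continuous_map.iterate f))
  have hxV : x ∈ V := by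
    rw [hV]
    simp only [Set.mem_iInter, Set.mem_preimage]
    intro f hf
    exact (hFprop f hf).2
  -- every point visits V within finitely many steps
  have hcover : (Set.univ : Set S.carrier) ⊆ ⋃ k : ℕ, (S.map^[k+1]) ⁻¹' V := by
    intro z _
    obtain ⟨w, hw, hwV⟩ := (hmin z).exists_mem_open hVopen ⟨x, hxV⟩
    obtain ⟨n, hnpos, hnw⟩ := hw
    obtain ⟨k, rfl⟩ := Nat.exists_eq_add_of_lt hnpos  -- n = 0 + k + 1
    simp only [Set.mem_iUnion, Set.mem_preimage]
    refine ⟨k, ?_⟩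
    rw [Nat.zero_add] at hnw
    rw [hnw]; exact hwV
  obtain ⟨K, hK⟩ := isCompact_univ.elim_finite_subcover
    (fun k : ℕ => (S.map^[k+1]) ⁻¹' V)
    (fun k => hVopen.preimage (S.continuous_map.iterate (k+1))) hcover
  -- apply thickness with E := K.image (·+1)
  obtain ⟨n, hnpos, hn⟩ := hThick (K.image (· + 1))
  -- T^[n] x lies in some piece
  have : S.map^[n] x ∈ ⋃ k ∈ K, (S.map^[k+1]) ⁻¹' V := hK (Set.mem_univ _)
  simp only [Set.mem_iUnion, Set.mem_preimage] at this
  obtain ⟨k, hkK, hkV⟩ := this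
  have hkE : (k + 1) + n ∈ ⋃ f ∈ F, NSub B f :=
    hn (k+1) (Finset.mem_image_of_mem _ hkK)
  simp only [Set.mem_iUnion, NSub, Set.mem_setOf_eq] at hkE
  obtain ⟨f, hfF, _, hfB⟩ := hkE
  -- m := k+1+n+f ∈ B and T^[m] x ∈ U
  have hTm : S.map^[(k+1+n)+f] x ∈ U := by
    have h1 : S.map^[k+1] (S.map^[n] x) ∈ V := hkV
    rw [hV] at h1
    simp only [Set.mem_iInter, Set.mem_preimage] at h1
    have := h1 f hfF
    rw [← Function.iterate_add_apply, ← Function.iterate_add_apply] at this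
    rwa [show f + (k+1) + n = (k+1+n)+f by ring] at this
  have hmpos : 0 < (k+1+n)+f := by omega
  have hmB : (k+1+n)+f ∈ B := hfB
  rcases hmB with h1 | h2
  · exact ⟨_, h1, hmpos, hTm⟩
  · exact absurd ⟨hmpos, hTm⟩ h2


/-- the one-sided shift -/
def mshift : (ℕ → Bool) → (ℕ → Bool) := fun w n => w (n + 1)

lemma mshift_cont : Continuous mshift :=
  continuous_pi fun n => continuous_apply (n + 1)

lemma mshift_iterate (w : ℕ → Bool) (n i : ℕ) : (mshift^[n] w) i = w (i + n) := by
  induction n generalizing w i with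
  | zero => rfl
  | succ n ih =>
    rw [Function.iterate_succ_apply, ih]
    show w (i + n + 1) = w (i + (n + 1))
    rfl

/-- cylinder sets are neighbourhoods -/
lemma cyl_subset_of_isOpen {V : Set (ℕ → Bool)} (hV : IsOpen V) {y : ℕ → Bool} (hy : y ∈ V) :
    ∃ K, ∀ w : ℕ → Bool, (∀ i < K, w i = y i) → w ∈ V := by
  rw [isOpen_pi_iff] at hV
  obtain ⟨I, u, hu, hsub⟩ := hV y hy
  refine ⟨(I.sup id) + 1, fun w hw => hsub ?_⟩
  intro a ha
  have h2 : a ≤ I.sup id := Finset.le_sup (f := id) ha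
  have : w a = y a := hw a (by omega)
  rw [this]
  exact (hu a ha).2

lemma cyl_isOpen (y : ℕ → Bool) (K : ℕ) : IsOpen {w : ℕ → Bool | ∀ i < K, w i = y i} := by
  have : {w : ℕ → Bool | ∀ i < K, w i = y i} =
      ⋂ i ∈ Finset.range K, (fun w : ℕ → Bool => w i) ⁻¹' {y i} := by
    ext w
    simp [Finset.mem_range]
  rw [this]
  exact isOpen_biInter_finset fun i _ => (continuous_apply i).isOpen_preimage _ (isOpen_discrete _)

lemma hard_core (A B : Set ℕ) (hAB : A ⊆ B) (hdt : DynThick A)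
    (D : Set ℕ) (hDB : ∀ d ∈ D, d ∉ B) (hDne : D.Nonempty)
    (hsyn : ∀ L, ∃ N, ∀ a : ℕ, ∃ m, a < m ∧ m ≤ a + N ∧ ∀ i < L, (m + i ∈ D ↔ i ∈ D)) :
    False := by
  classical
  letI : MetricSpace (ℕ → Bool) := TopologicalSpace.metrizableSpaceMetric _
  set z : ℕ → Bool := fun n => decide (n ∈ D) with hzdef
  have hz : ∀ L, ∃ N, ∀ a : ℕ, ∃ m, a < m ∧ m ≤ a + N ∧ ∀ i < L, z (m + i) = z i := by
    intro L
    obtain ⟨N, hN⟩ := hsyn L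
    exact ⟨N, fun a => by
      obtain ⟨m, h1, h2, h3⟩ := hN a
      exact ⟨m, h1, h2, fun i hi => by
        simp only [hzdef, decide_eq_decide]
        exact h3 i hi⟩⟩
  set M : Set (ℕ → Bool) := closure (Set.range fun n : ℕ => mshift^[n] z) with hMdef
  have horb : ∀ n : ℕ, mshift^[n] z ∈ M := fun n => subset_closure ⟨n, rfl⟩
  have hzM : z ∈ M := horb 0
  have hMinv : ∀ w ∈ M, mshift w ∈ M := by
    intro w hw
    have h1 : mshift w ∈ mshift '' M := ⟨w, hw, rfl⟩
    have h2 : mshift '' M ⊆ closure (mshift '' Set.range fun n : ℕ => mshift^[n] z) :=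
      image_closure_subset_closure_image mshift_cont
    have h3 : (mshift '' Set.range fun n : ℕ => mshift^[n] z) ⊆
        Set.range fun n : ℕ => mshift^[n] z := by
      rintro _ ⟨_, ⟨n, rfl⟩, rfl⟩
      exact ⟨n + 1, by simpa using Function.iterate_succ_apply' mshift n z⟩
    exact closure_mono h3 (h2 h1)
  have hMclosed : IsClosed M := isClosed_closure
  have hMcpt : CompactSpace ↥M := isCompact_iff_compactSpace.mp hMclosed.isCompact
  -- matching within M
  have match_init : ∀ w ∈ M, ∀ K, ∃ s : ℕ, ∀ i < K, w i = z (i + s) := by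
    intro w hw K
    have hO : IsOpen {v : ℕ → Bool | ∀ i < K, v i = w i} := cyl_isOpen w K
    have := (_root_.mem_closure_iff.mp hw) _ hO (fun i _ => rfl)
    obtain ⟨v, hv, s, rfl⟩ := this
    refine ⟨s, fun i hi => ?_⟩
    rw [← hv i hi]
    exact mshift_iterate z s i
  -- step 1 : forward return to initial window of z
  have step1 : ∀ w ∈ M, ∀ L, ∃ m, 1 ≤ m ∧ ∀ i < L, (mshift^[m] w) i = z i := by
    intro w hw L
    obtain ⟨N, hN⟩ := hz L
    obtain ⟨s, hs⟩ := match_init w hw (L + N + 1)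
    obtain ⟨m', h1, h2, h3⟩ := hN s
    refine ⟨m' - s, by omega, fun i hi => ?_⟩
    rw [mshift_iterate]
    have : i + (m' - s) < L + N + 1 := by omega
    rw [hs _ this]
    have : i + (m' - s) + s = m' + i := by omega
    rw [this]
    exact h3 i hi
  -- the dynamical system
  set T : ↥M → ↥M := fun p => ⟨mshift p.1, hMinv _ p.2⟩ with hTdef
  have hTcont : Continuous T :=
    Continuous.subtype_mk (mshift_cont.comp continuous_subtype_val) _
  have hTiter : ∀ (n : ℕ) (p : ↥M), ((T^[n] p : ↥M) : ℕ → Bool) = mshift^[n] p.1 := by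
    intro n
    induction n with
    | zero => intro p; rfl
    | succ n ih =>
      intro p
      rw [Function.iterate_succ_apply', Function.iterate_succ_apply']
      show mshift _ = _
      exact congrArg mshift (ih p)
  set S : MetricDynSystem :=
    { carrier := ↥M
      carrier_nonempty := ⟨⟨z, hzM⟩⟩
      map := T
      continuous_map := hTcont } with hSdef
  have hmin : S.Minimal := by
    intro p
    rw [dense_iff_inter_open]
    rintro U hU ⟨q, hq⟩
    obtain ⟨V, hVopen, rfl⟩ := isOpen_induced_iff.mp hU
    have hqV : (q : ℕ → Bool) ∈ V := hq
    obtain ⟨K, hK⟩ := cyl_subset_of_isOpen hVopen hqV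
    obtain ⟨s, hs⟩ := match_init q q.2 K
    obtain ⟨m, hm1, hm2⟩ := step1 p.1 p.2 (K + s)
    refine ⟨T^[m + s] p, ?_, ⟨m + s, by omega, rfl⟩⟩
    show ((T^[m+s] p : ↥M) : ℕ → Bool) ∈ V
    rw [hTiter]
    apply hK
    intro i hi
    rw [mshift_iterate]
    have h2 := hm2 (i + s) (by omega)
    rw [mshift_iterate] at h2
    have h3 : i + (m + s) = i + s + m := by omega
    rw [h3, h2]
    exact (hs i hi).symm
  -- the open set
  set U : Set ↥M := {p : ↥M | (p : ℕ → Bool) 0 = true} with hUdef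
  have hUopen : IsOpen U := by
    have : U = Subtype.val ⁻¹' ((fun w : ℕ → Bool => w 0) ⁻¹' {true}) := rfl
    rw [this]
    exact (((continuous_apply 0).comp continuous_subtype_val).isOpen_preimage _
      (isOpen_discrete _))
  obtain ⟨d₀, hd₀⟩ := hDne
  have hUne : U.Nonempty := by
    refine ⟨⟨mshift^[d₀] z, horb d₀⟩, ?_⟩
    show (mshift^[d₀] z) 0 = true
    rw [mshift_iterate]
    simp only [hzdef, Nat.zero_add, decide_eq_true_eq]
    exact hd₀
  obtain ⟨a, haA, hapos, haU⟩ := hdt S hmin ⟨z, hzM⟩ U hUopen hUne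
  have : ((T^[a] ⟨z, hzM⟩ : ↥M) : ℕ → Bool) 0 = true := haU
  rw [hTiter] at this
  rw [mshift_iterate] at this
  simp only [hzdef, Nat.zero_add, decide_eq_true_eq] at this
  exact hDB a this (hAB haA)



section Construction

variable (Nf : Finset ℕ → ℕ) (nf : Finset ℕ → ℕ → ℕ)

def fillW (pat : ℕ → Finset ℕ) (len : ℕ → ℕ) : ℕ → ℕ → ℕ → Finset ℕ
  | 0, a, b =>
    if a + Nf (pat 0) + len 0 + 1 ≤ b ∧ a < nf (pat 0) a ∧ a + len 0 < nf (pat 0) a + len 0 then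
      (pat 0).image (fun p => nf (pat 0) a + p) ∪ fillW pat len 0 (nf (pat 0) a + len 0) b
    else ∅
  | (j+1), a, b =>
    if a + Nf (pat (j+1)) + len (j+1) + 1 ≤ b ∧ a < nf (pat (j+1)) a
        ∧ a + len (j+1) < nf (pat (j+1)) a + len (j+1) then
      (pat (j+1)).image (fun p => nf (pat (j+1)) a + p)
        ∪ fillW pat len (j+1) (nf (pat (j+1)) a + len (j+1)) b
        ∪ fillW pat len j a (nf (pat (j+1)) a)
    else fillW pat len j a b
  termination_by j a b => (j, b - a)
  decreasing_by
  · exact Prod.Lex.right _ (by omega)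
  · exact Prod.Lex.right _ (by omega)
  · exact Prod.Lex.left _ _ (by omega)
  · exact Prod.Lex.left _ _ (by omega)

variable (pat : ℕ → Finset ℕ) (len : ℕ → ℕ)

def fillLow : ℕ → ℕ → ℕ → Finset ℕ
  | 0, _, _ => ∅
  | (j+1), a, b => fillW Nf nf pat len j a b

variable (hnf1 : ∀ P a, a < nf P a)

include hnf1 in
lemma fillW_eq_pos (j a b : ℕ) (hg : a + Nf (pat j) + len j + 1 ≤ b) :
    fillW Nf nf pat len j a b =
      ((pat j).image (fun p => nf (pat j) a + p)
        ∪ fillW Nf nf pat len j (nf (pat j) a + len j) b)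
        ∪ fillLow Nf nf pat len j a (nf (pat j) a) := by
  have h2 := hnf1 (pat j) a
  cases j with
  | zero =>
    rw [fillW]
    rw [if_pos ⟨hg, h2, by omega⟩]
    simp [fillLow]
  | succ j =>
    rw [fillW]
    rw [if_pos ⟨hg, h2, by omega⟩]
    rfl

lemma fillW_eq_neg (j a b : ℕ) (hg : ¬ (a + Nf (pat j) + len j + 1 ≤ b)) :
    fillW Nf nf pat len j a b = fillLow Nf nf pat len j a b := by
  cases j with
  | zero => rw [fillW]; rw [if_neg (by tauto)]; rfl
  | succ j => rw [fillW]; rw [if_neg (by tauto)]; rfl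

end Construction

section Lemmas

variable (C : Set ℕ)
variable (Nf : Finset ℕ → ℕ) (nf : Finset ℕ → ℕ → ℕ) (pat : ℕ → Finset ℕ) (len : ℕ → ℕ)

variable (hnf1 : ∀ P a, a < nf P a)
variable (hC : ∀ i, (↑(pat i) : Set ℕ) ⊆ C)
variable (hbd : ∀ i, ∀ y ∈ pat i, y < len i)
variable (hnf2 : ∀ (P : Finset ℕ) (a : ℕ), (↑P : Set ℕ) ⊆ C → nf P a ≤ a + Nf P)
variable (hnf3 : ∀ (P : Finset ℕ) (a : ℕ), (↑P : Set ℕ) ⊆ C → ∀ p ∈ P, nf P a + p ∈ C)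
variable (hmono : ∀ i₁ i₂, i₁ ≤ i₂ → len i₁ ≤ len i₂)
variable (hpre : ∀ i₁ i₂, i₁ ≤ i₂ → ∀ y, y < len i₁ → (y ∈ pat i₂ ↔ y ∈ pat i₁))

include hnf1 hC hbd hnf2 hnf3 in
lemma fill_subset : ∀ fuel j a b, b - a + j ≤ fuel →
    ∀ y ∈ fillW Nf nf pat len j a b, y ∈ C ∧ a < y ∧ y < b := by
  intro fuel
  induction fuel with
  | zero =>
    intro j a b hf y hy
    have hj : j = 0 := by omega
    subst hj
    rw [fillW_eq_neg Nf nf pat len 0 a b (by omega)] at hy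
    simp [fillLow] at hy
  | succ n ih =>
    intro j a b hf y hy
    by_cases hg : a + Nf (pat j) + len j + 1 ≤ b
    · rw [fillW_eq_pos Nf nf pat len hnf1 j a b hg] at hy
      have hm1 : a < nf (pat j) a := hnf1 (pat j) a
      have hm2 : nf (pat j) a ≤ a + Nf (pat j) := hnf2 _ a (hC j)
      rcases Finset.mem_union.mp hy with hy | hy
      · rcases Finset.mem_union.mp hy with hy | hy
        · obtain ⟨p, hp, rfl⟩ := Finset.mem_image.mp hy
          refine ⟨hnf3 _ a (hC j) p hp, by omega, ?_⟩
          have := hbd j p hp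
          omega
        · have := ih j (nf (pat j) a + len j) b (by omega) y hy
          refine ⟨this.1, by omega, this.2.2⟩
      · cases j with
        | zero => simp [fillLow] at hy
        | succ j' =>
          have := ih j' a (nf (pat (j'+1)) a) (by omega) y hy
          exact ⟨this.1, this.2.1, by omega⟩
    · rw [fillW_eq_neg Nf nf pat len j a b hg] at hy
      cases j with
      | zero => simp [fillLow] at hy
      | succ j' =>
        have := ih j' a b (by omega) y hy
        exact this

include hnf1 hC hbd hnf2 hnf3 hmono hpre in
lemma fill_first : ∀ fuel j a b, b - a + j ≤ fuel → ∀ i, i ≤ j →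
    a + Nf (pat i) + len i + 1 ≤ b →
    ∃ m, a < m ∧ m ≤ a + Nf (pat i) + len i + 1 ∧ m + len i ≤ b ∧
      ∀ y, y < len i → ((m + y ∈ fillW Nf nf pat len j a b) ↔ y ∈ pat i) := by
  intro fuel
  induction fuel with
  | zero =>
    intro j a b hf i hij hpre'
    have hj : j = 0 := by omega
    omega
  | succ n ih =>
    intro j a b hf i hij hcond
    have hm1 : a < nf (pat j) a := hnf1 (pat j) a
    have hm2 : nf (pat j) a ≤ a + Nf (pat j) := hnf2 _ a (hC j)
    by_cases hg : a + Nf (pat j) + len j + 1 ≤ b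
    · set m₀ := nf (pat j) a with hm₀
      rw [fillW_eq_pos Nf nf pat len hnf1 j a b hg]
      by_cases hcase : m₀ ≤ a + Nf (pat i) + len i + 1
      · refine ⟨m₀, hm1, hcase, by have := hmono i j hij; omega, fun y hy => ?_⟩
        constructor
        · intro hmem
          rcases Finset.mem_union.mp hmem with h | h
          · rcases Finset.mem_union.mp h with h | h
            · obtain ⟨p, hp, hpe⟩ := Finset.mem_image.mp h
              have : y = p := by omega
              subst this
              exact (hpre i j hij y hy).mp hp
            · exfalso
              have := fill_subset C Nf nf pat len hnf1 hC hbd hnf2 hnf3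
                (b - (m₀ + len j) + j) j (m₀ + len j) b (by omega) _ h
              have hy2 : y < len j := lt_of_lt_of_le hy (hmono i j hij)
              omega
          · exfalso
            cases j with
            | zero => simp [fillLow] at h
            | succ j' =>
              have := fill_subset C Nf nf pat len hnf1 hC hbd hnf2 hnf3
                (m₀ - a + j') j' a m₀ (by omega) _ h
              omega
        · intro hyp
          apply Finset.mem_union_left
          apply Finset.mem_union_left
          exact Finset.mem_image.mpr ⟨y, (hpre i j hij y hy).mpr hyp, rfl⟩
      · -- m₀ is far : recurse into the left fill
        have hij' : i < j := by
          rcases Nat.eq_or_lt_of_le hij with rfl | h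
          · omega
          · exact h
        obtain ⟨j', rfl⟩ : ∃ j', j = j' + 1 := ⟨j - 1, by omega⟩
        obtain ⟨m, h1, h2, h3, h4⟩ := ih j' a m₀ (by omega) i (by omega) (by omega)
        refine ⟨m, h1, h2, by omega, fun y hy => ?_⟩
        rw [← h4 y hy]
        constructor
        · intro hmem
          rcases Finset.mem_union.mp hmem with h | h
          · exfalso
            rcases Finset.mem_union.mp h with h | h
            · obtain ⟨p, hp, hpe⟩ := Finset.mem_image.mp h
              omega
            · have := fill_subset C Nf nf pat len hnf1 hC hbd hnf2 hnf3
                (b - (m₀ + len (j'+1)) + (j'+1)) (j'+1) (m₀ + len (j'+1)) b (by omega) _ h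
              omega
          · exact h
        · intro hmem
          exact Finset.mem_union_right _ hmem
    · rw [fillW_eq_neg Nf nf pat len j a b hg]
      cases j with
      | zero =>
        exfalso
        have : i = 0 := by omega
        subst this
        omega
      | succ j' =>
        rcases Nat.eq_or_lt_of_le hij with rfl | hlt
        · exfalso; omega
        · exact ih j' a b (by omega) i (by omega) hcond

end Lemmas

section GapLemma

variable (C : Set ℕ)
variable (Nf : Finset ℕ → ℕ) (nf : Finset ℕ → ℕ → ℕ) (pat : ℕ → Finset ℕ) (len : ℕ → ℕ)

variable (hnf1 : ∀ P a, a < nf P a)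
variable (hC : ∀ i, (↑(pat i) : Set ℕ) ⊆ C)
variable (hbd : ∀ i, ∀ y ∈ pat i, y < len i)
variable (hnf2 : ∀ (P : Finset ℕ) (a : ℕ), (↑P : Set ℕ) ⊆ C → nf P a ≤ a + Nf P)
variable (hnf3 : ∀ (P : Finset ℕ) (a : ℕ), (↑P : Set ℕ) ⊆ C → ∀ p ∈ P, nf P a + p ∈ C)
variable (hmono : ∀ i₁ i₂, i₁ ≤ i₂ → len i₁ ≤ len i₂)
variable (hpre : ∀ i₁ i₂, i₁ ≤ i₂ → ∀ y, y < len i₁ → (y ∈ pat i₂ ↔ y ∈ pat i₁))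
variable (hend : ∀ i₁ i₂, i₁ ≤ i₂ → ∀ y, y < len i₁ →
  ((len i₂ - len i₁) + y ∈ pat i₂ ↔ y ∈ pat i₁))
variable (hins : ∀ i₁ i₂, i₁ ≤ i₂ → ∀ x, x + (Nf (pat i₁) + 3 * len i₁ + 3) + len i₁ ≤ len i₂ →
   ∃ m, x ≤ m ∧ m ≤ x + (Nf (pat i₁) + 3 * len i₁ + 3) ∧ m + len i₁ ≤ len i₂ ∧
     ∀ y, y < len i₁ → (m + y ∈ pat i₂ ↔ y ∈ pat i₁))

include hnf1 hC hbd hnf2 hnf3 hmono hpre hend hins in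
lemma fill_gap : ∀ fuel j a b, b - a + j ≤ fuel → ∀ i, i ≤ j → ∀ x, a ≤ x →
    x + (Nf (pat i) + 3 * len i + 3) ≤ b →
    ∃ m, x ≤ m ∧ m ≤ x + (Nf (pat i) + 3 * len i + 3) ∧ a < m ∧ m + len i ≤ b ∧
      ∀ y, y < len i → ((m + y ∈ fillW Nf nf pat len j a b) ↔ y ∈ pat i) := by
  intro fuel
  induction fuel with
  | zero =>
    intro j a b hf i hij x hax hxb
    omega
  | succ n ih =>
    intro j a b hf i hij x hax hxb
    have hm1 : a < nf (pat j) a := hnf1 (pat j) a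
    have hm2 : nf (pat j) a ≤ a + Nf (pat j) := hnf2 _ a (hC j)
    have hmij : len i ≤ len j := hmono i j hij
    have hNij : i = j ∨ i < j := by omega
    by_cases hg : a + Nf (pat j) + len j + 1 ≤ b
    · set m₀ := nf (pat j) a with hm₀
      rw [fillW_eq_pos Nf nf pat len hnf1 j a b hg]
      -- abbreviations for disjointness facts
      have hrightbd : ∀ y' ∈ fillW Nf nf pat len j (m₀ + len j) b, m₀ + len j < y' ∧ y' < b :=
        fun y' hy' => (fill_subset C Nf nf pat len hnf1 hC hbd hnf2 hnf3
          (b - (m₀ + len j) + j) j (m₀ + len j) b (by omega) y' hy').2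
      have hlowbd : ∀ y' ∈ fillLow Nf nf pat len j a m₀, a < y' ∧ y' < m₀ := by
        cases j with
        | zero => intro y' hy'; simp [fillLow] at hy'
        | succ j' =>
          intro y' hy'
          exact (fill_subset C Nf nf pat len hnf1 hC hbd hnf2 hnf3
            (m₀ - a + j') j' a m₀ (by omega) y' hy').2
      have himgbd : ∀ y' ∈ (pat j).image (fun p => m₀ + p), m₀ ≤ y' ∧ y' < m₀ + len j := by
        intro y' hy'
        obtain ⟨p, hp, rfl⟩ := Finset.mem_image.mp hy'
        have := hbd j p hp
        omega
      -- generic clean-lifting for a window inside the copy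
      have hcopy : ∀ q, q + len i ≤ len j →
          (∀ y, y < len i → (q + y ∈ pat j ↔ y ∈ pat i)) →
          ∀ y, y < len i →
            ((m₀ + q + y ∈ ((pat j).image (fun p => m₀ + p)
              ∪ fillW Nf nf pat len j (m₀ + len j) b)
              ∪ fillLow Nf nf pat len j a m₀) ↔ y ∈ pat i) := by
        intro q hq hclean y hy
        constructor
        · intro hmem
          rcases Finset.mem_union.mp hmem with h | h
          · rcases Finset.mem_union.mp h with h | h
            · obtain ⟨p, hp, hpe⟩ := Finset.mem_image.mp h
              have : p = q + y := by omega
              subst this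
              exact (hclean y hy).mp hp
            · exfalso; have := hrightbd _ h; omega
          · exfalso; have := hlowbd _ h; omega
        · intro hyp
          apply Finset.mem_union_left
          apply Finset.mem_union_left
          exact Finset.mem_image.mpr ⟨q + y, (hclean y hy).mpr hyp, by omega⟩
      -- generic lifting from the right fill
      have hliftright : ∀ m', m₀ + len j < m' →
          (∀ y, y < len i →
            ((m' + y ∈ fillW Nf nf pat len j (m₀ + len j) b) ↔ y ∈ pat i)) →
          ∀ y, y < len i →
            ((m' + y ∈ ((pat j).image (fun p => m₀ + p)
              ∪ fillW Nf nf pat len j (m₀ + len j) b)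
              ∪ fillLow Nf nf pat len j a m₀) ↔ y ∈ pat i) := by
        intro m' hm' hclean y hy
        constructor
        · intro hmem
          rcases Finset.mem_union.mp hmem with h | h
          · rcases Finset.mem_union.mp h with h | h
            · exfalso; have := himgbd _ h; omega
            · exact (hclean y hy).mp h
          · exfalso; have := hlowbd _ h; omega
        · intro hyp
          apply Finset.mem_union_left
          apply Finset.mem_union_right
          exact (hclean y hy).mpr hyp
      rcases hNij with rfl | hilt
      · -- i = j
        by_cases hc1 : x ≤ m₀
        · -- use the copy at m₀ itself
          refine ⟨m₀, hc1, by omega, hm1, by omega, ?_⟩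
          have := hcopy 0 (by omega) (fun y hy => by simp)
          simpa [← hm₀] using this
        · push_neg at hc1
          have hg' : (m₀ + len i) + Nf (pat i) + len i + 1 ≤ b := by omega
          by_cases hc2 : m₀ + len i ≤ x
          · -- recurse into the right fill at the same level
            obtain ⟨m, h1, h2, h3, h4, h5⟩ := ih i (m₀ + len i) b (by omega) i (le_refl i)
              x hc2 hxb
            exact ⟨m, h1, h2, by omega, h4, hliftright m h3 h5⟩
          · -- x is inside the copy : take the first copy of the right fill
            push_neg at hc2
            obtain ⟨m, h1, h2, h3, h4⟩ := fill_first C Nf nf pat len hnf1 hC hbd hnf2 hnf3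
              hmono hpre (b - (m₀ + len i) + i) i (m₀ + len i) b (by omega) i (le_refl i) hg'
            exact ⟨m, by omega, by omega, by omega, h3, hliftright m h1 h4⟩
      · -- i < j
        obtain ⟨j', rfl⟩ : ∃ j', j = j' + 1 := ⟨j - 1, by omega⟩
        by_cases hc1 : x + (Nf (pat i) + 3 * len i + 3) ≤ m₀
        · -- left fill
          obtain ⟨m, h1, h2, h3, h4, h5⟩ := ih j' a m₀ (by omega) i (by omega) x hax hc1
          refine ⟨m, h1, h2, h3, by omega, fun y hy => ?_⟩
          rw [← h5 y hy]
          constructor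
          · intro hmem
            rcases Finset.mem_union.mp hmem with h | h
            · exfalso
              rcases Finset.mem_union.mp h with h | h
              · have := himgbd _ h; omega
              · have := hrightbd _ h; omega
            · exact h
          · intro hmem
            exact Finset.mem_union_right _ hmem
        · push_neg at hc1
          by_cases hc2 : x ≤ m₀
          · -- prefix copy at m₀
            refine ⟨m₀, hc2, by omega, hm1, by omega, ?_⟩
            have := hcopy 0 (by omega) (fun y hy => by
              simpa using hpre i (j'+1) hij y hy)
            simpa [← hm₀] using this
          · push_neg at hc2
            by_cases hc3 : x < m₀ + len (j'+1)
            · -- x inside the copy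
              by_cases hc4 : (x - m₀) + (Nf (pat i) + 3 * len i + 3) + len i ≤ len (j'+1)
              · -- interior structure of the pattern
                obtain ⟨q, hq1, hq2, hq3, hq4⟩ := hins i (j'+1) hij (x - m₀) hc4
                refine ⟨m₀ + q, by omega, by omega, by omega, by omega, ?_⟩
                exact hcopy q hq3 hq4
              · push_neg at hc4
                by_cases hc5 : x - m₀ + len i ≤ len (j'+1)
                · -- the end copy of the pattern
                  refine ⟨m₀ + (len (j'+1) - len i), by omega, by omega, by omega, by omega, ?_⟩
                  exact hcopy (len (j'+1) - len i) (by omega) (hend i (j'+1) hij)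
                · push_neg at hc5
                  -- cross over to the right fill
                  have hgi : (m₀ + len (j'+1)) + Nf (pat i) + len i + 1 ≤ b := by omega
                  obtain ⟨m, h1, h2, h3, h4⟩ := fill_first C Nf nf pat len hnf1 hC hbd hnf2 hnf3
                    hmono hpre (b - (m₀ + len (j'+1)) + (j'+1)) (j'+1) (m₀ + len (j'+1)) b
                    (by omega) i hij hgi
                  exact ⟨m, by omega, by omega, by omega, h3, hliftright m h1 h4⟩
            · -- x at or beyond the right fill
              push_neg at hc3
              obtain ⟨m, h1, h2, h3, h4, h5⟩ := ih (j'+1) (m₀ + len (j'+1)) b (by omega) i hij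
                x hc3 hxb
              exact ⟨m, h1, h2, by omega, h4, hliftright m h3 h5⟩
    · rw [fillW_eq_neg Nf nf pat len j a b hg]
      cases j with
      | zero =>
        exfalso
        have : i = 0 := by omega
        subst this
        omega
      | succ j' =>
        rcases Nat.eq_or_lt_of_le hij with rfl | hlt
        · exfalso; omega
        · exact ih j' a b (by omega) i (by omega) x hax hxb

end GapLemma

section Master

variable (Nf : Finset ℕ → ℕ) (nf : Finset ℕ → ℕ → ℕ)

def patlen (c₀ : ℕ) : ℕ → Finset ℕ × ℕ
  | 0 => ({c₀}, c₀ + 1)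
  | (k+1) =>
    let p : ℕ → Finset ℕ := fun i => (patlen c₀ (min i k)).1
    let l : ℕ → ℕ := fun i => (patlen c₀ (min i k)).2
    let m := nf (p k) (l k)
    (p k ∪ fillW Nf nf p l k (l k) m ∪ (p k).image (fun q => m + q), m + l k)
  termination_by k => k
  decreasing_by
  all_goals exact Nat.lt_succ_of_le (Nat.min_le_right _ _)

variable (c₀ : ℕ)

lemma patlen_succ (k : ℕ) : patlen Nf nf c₀ (k+1) =
    ((patlen Nf nf c₀ k).1
       ∪ fillW Nf nf (fun i => (patlen Nf nf c₀ (min i k)).1)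
           (fun i => (patlen Nf nf c₀ (min i k)).2) k
           ((patlen Nf nf c₀ k).2)
           (nf (patlen Nf nf c₀ k).1 (patlen Nf nf c₀ k).2)
       ∪ ((patlen Nf nf c₀ k).1).image
           (fun q => nf (patlen Nf nf c₀ k).1 (patlen Nf nf c₀ k).2 + q),
     nf (patlen Nf nf c₀ k).1 (patlen Nf nf c₀ k).2 + (patlen Nf nf c₀ k).2) := by
  rw [patlen]
  simp only [Nat.min_self]

variable (C : Set ℕ)

/-- the full induction package -/
def Pack (k : ℕ) : Prop :=
  ((↑(patlen Nf nf c₀ k).1 : Set ℕ) ⊆ C) ∧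
  (∀ y ∈ (patlen Nf nf c₀ k).1, y < (patlen Nf nf c₀ k).2) ∧
  (∀ i, i ≤ k → (patlen Nf nf c₀ i).2 ≤ (patlen Nf nf c₀ k).2) ∧
  (∀ i, i ≤ k → ∀ y, y < (patlen Nf nf c₀ i).2 →
    (y ∈ (patlen Nf nf c₀ k).1 ↔ y ∈ (patlen Nf nf c₀ i).1)) ∧
  (∀ i, i ≤ k → ∀ y, y < (patlen Nf nf c₀ i).2 →
    (((patlen Nf nf c₀ k).2 - (patlen Nf nf c₀ i).2) + y ∈ (patlen Nf nf c₀ k).1 ↔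
      y ∈ (patlen Nf nf c₀ i).1)) ∧
  (∀ i, i ≤ k → ∀ x,
    x + (Nf (patlen Nf nf c₀ i).1 + 3 * (patlen Nf nf c₀ i).2 + 3) + (patlen Nf nf c₀ i).2 ≤
      (patlen Nf nf c₀ k).2 →
    ∃ m, x ≤ m ∧ m ≤ x + (Nf (patlen Nf nf c₀ i).1 + 3 * (patlen Nf nf c₀ i).2 + 3) ∧
      m + (patlen Nf nf c₀ i).2 ≤ (patlen Nf nf c₀ k).2 ∧
      ∀ y, y < (patlen Nf nf c₀ i).2 →
        ((m + y ∈ (patlen Nf nf c₀ k).1) ↔ y ∈ (patlen Nf nf c₀ i).1))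

variable (hnf1 : ∀ P a, a < nf P a)
variable (hnf2 : ∀ (P : Finset ℕ) (a : ℕ), (↑P : Set ℕ) ⊆ C → nf P a ≤ a + Nf P)
variable (hnf3 : ∀ (P : Finset ℕ) (a : ℕ), (↑P : Set ℕ) ⊆ C → ∀ p ∈ P, nf P a + p ∈ C)
variable (hc₀ : c₀ ∈ C)

include hnf1 hnf2 hnf3 hc₀ in
lemma pack_all : ∀ k, Pack Nf nf c₀ C k := by
  intro k
  induction k using Nat.strong_induction_on with
  | _ k IH =>
  match k with
  | 0 =>
    have h0 : patlen Nf nf c₀ 0 = ({c₀}, c₀ + 1) := by rw [patlen]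
    refine ⟨?_, ?_, ?_, ?_, ?_, ?_⟩
    · rw [h0]; simpa using hc₀
    · rw [h0]; intro y hy; simp only [Finset.mem_singleton] at hy; subst hy; omega
    · intro i hi
      have : i = 0 := by omega
      subst this; exact le_refl _
    · intro i hi y hy
      have : i = 0 := by omega
      subst this; exact Iff.rfl
    · intro i hi y hy
      have : i = 0 := by omega
      subst this
      simp
    · intro i hi x hx
      have : i = 0 := by omega
      subst this
      exfalso
      omega
  | (k+1) =>
    -- the clamped functions used at stage k+1
    set p : ℕ → Finset ℕ := fun i => (patlen Nf nf c₀ (min i k)).1 with hp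
    set l : ℕ → ℕ := fun i => (patlen Nf nf c₀ (min i k)).2 with hl
    have hpack : ∀ t, t ≤ k → Pack Nf nf c₀ C t := fun t ht => IH t (by omega)
    obtain ⟨pk1, pk2, pk3, pk4, pk5, pk6⟩ := hpack k (le_refl k)
    -- pack hypotheses for the clamped functions
    have hCp : ∀ i, (↑(p i) : Set ℕ) ⊆ C := fun i => (hpack (min i k) (Nat.min_le_right _ _)).1
    have hbdp : ∀ i, ∀ y ∈ p i, y < l i := fun i => (hpack (min i k) (Nat.min_le_right _ _)).2.1
    have hmonop : ∀ i₁ i₂, i₁ ≤ i₂ → l i₁ ≤ l i₂ := by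
      intro i₁ i₂ h
      exact (hpack (min i₂ k) (Nat.min_le_right _ _)).2.2.1 (min i₁ k) (by omega)
    have hprep : ∀ i₁ i₂, i₁ ≤ i₂ → ∀ y, y < l i₁ → (y ∈ p i₂ ↔ y ∈ p i₁) := by
      intro i₁ i₂ h y hy
      exact (hpack (min i₂ k) (Nat.min_le_right _ _)).2.2.2.1 (min i₁ k) (by omega) y hy
    have hendp : ∀ i₁ i₂, i₁ ≤ i₂ → ∀ y, y < l i₁ → ((l i₂ - l i₁) + y ∈ p i₂ ↔ y ∈ p i₁) := by
      intro i₁ i₂ h y hy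
      exact (hpack (min i₂ k) (Nat.min_le_right _ _)).2.2.2.2.1 (min i₁ k) (by omega) y hy
    have hinsp : ∀ i₁ i₂, i₁ ≤ i₂ → ∀ x, x + (Nf (p i₁) + 3 * l i₁ + 3) + l i₁ ≤ l i₂ →
        ∃ m, x ≤ m ∧ m ≤ x + (Nf (p i₁) + 3 * l i₁ + 3) ∧ m + l i₁ ≤ l i₂ ∧
          ∀ y, y < l i₁ → (m + y ∈ p i₂ ↔ y ∈ p i₁) := by
      intro i₁ i₂ h x hx
      exact (hpack (min i₂ k) (Nat.min_le_right _ _)).2.2.2.2.2 (min i₁ k) (by omega) x hx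
    -- notation for the construction at stage k+1
    set P : Finset ℕ := (patlen Nf nf c₀ k).1 with hP
    set Λ : ℕ := (patlen Nf nf c₀ k).2 with hΛ
    set m : ℕ := nf P Λ with hm
    set Fl : Finset ℕ := fillW Nf nf p l k Λ m with hFl
    have hpk : p k = P := by simp [hp, hP]
    have hlk : l k = Λ := by simp [hl, hΛ]
    have hQ : (patlen Nf nf c₀ (k+1)).1 = P ∪ Fl ∪ P.image (fun q => m + q) := by
      rw [patlen_succ]
    have hL : (patlen Nf nf c₀ (k+1)).2 = m + Λ := by
      rw [patlen_succ]
    have hm1 : Λ < m := hnf1 P Λ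
    have hm2 : m ≤ Λ + Nf P := hnf2 P Λ pk1
    have hFbd : ∀ y ∈ Fl, y ∈ C ∧ Λ < y ∧ y < m := by
      intro y hy
      exact fill_subset C Nf nf p l hnf1 hCp hbdp hnf2 hnf3 (m - Λ + k) k Λ m (by omega) y hy
    have himg : ∀ y ∈ P.image (fun q => m + q), m ≤ y ∧ y < m + Λ := by
      intro y hy
      obtain ⟨q, hq, rfl⟩ := Finset.mem_image.mp hy
      have := pk2 q hq
      omega
    -- the lifted "window" lemma : positions < Λ belong to Q iff they belong to P
    have hQP : ∀ y, y < Λ → (y ∈ (patlen Nf nf c₀ (k+1)).1 ↔ y ∈ P) := by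
      intro y hy
      rw [hQ]
      constructor
      · intro h
        rcases Finset.mem_union.mp h with h | h
        · rcases Finset.mem_union.mp h with h | h
          · exact h
          · exact absurd (hFbd y h).2.1 (by omega)
        · exact absurd (himg y h).1 (by omega)
      · intro h
        exact Finset.mem_union_left _ (Finset.mem_union_left _ h)
    -- positions in the final copy
    have hQcopy : ∀ q, q < Λ → (m + q ∈ (patlen Nf nf c₀ (k+1)).1 ↔ q ∈ P) := by
      intro q hq
      rw [hQ]
      constructor
      · intro h
        rcases Finset.mem_union.mp h with h | h
        · rcases Finset.mem_union.mp h with h | h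
          · have := pk2 _ h; omega
          · have := (hFbd _ h).2.2; omega
        · obtain ⟨q', hq', he⟩ := Finset.mem_image.mp h
          have : q' = q := by omega
          subst this; exact hq'
      · intro h
        exact Finset.mem_union_right _ (Finset.mem_image.mpr ⟨q, h, rfl⟩)
    -- positions in the middle fill
    have hQfill : ∀ y, Λ < y → y < m → (y ∈ (patlen Nf nf c₀ (k+1)).1 ↔ y ∈ Fl) := by
      intro y h1 h2
      rw [hQ]
      constructor
      · intro h
        rcases Finset.mem_union.mp h with h | h
        · rcases Finset.mem_union.mp h with h | h
          · have := pk2 _ h; omega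
          · exact h
        · have := (himg _ h).1; omega
      · intro h
        exact Finset.mem_union_left _ (Finset.mem_union_right _ h)
    refine ⟨?_, ?_, ?_, ?_, ?_, ?_⟩
    · -- A1
      rw [hQ]
      intro y hy
      simp only [Finset.coe_union, Set.mem_union, Finset.mem_coe] at hy
      rcases hy with (hy | hy) | hy
      · exact pk1 hy
      · exact (hFbd y hy).1
      · obtain ⟨q, hq, rfl⟩ := Finset.mem_image.mp hy
        exact hnf3 P Λ pk1 q hq
    · -- A2
      rw [hQ, hL]
      intro y hy
      rcases Finset.mem_union.mp hy with hy | hy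
      · rcases Finset.mem_union.mp hy with hy | hy
        · have := pk2 y hy; omega
        · have := (hFbd y hy).2.2; omega
      · exact (himg y hy).2
    · -- A3
      intro i hi
      rw [hL]
      rcases Nat.lt_or_ge i (k+1) with h | h
      · have := pk3 i (by omega); omega
      · have : i = k + 1 := by omega
        subst this; rw [hL]
    · -- A4
      intro i hi y hy
      rcases Nat.lt_or_ge i (k+1) with h | h
      · have hyΛ : y < Λ := lt_of_lt_of_le hy (pk3 i (by omega))
        rw [hQP y hyΛ]
        exact pk4 i (by omega) y hy
      · have : i = k + 1 := by omega
        subst this; rfl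
    · -- A5
      intro i hi y hy
      rcases Nat.lt_or_ge i (k+1) with h | h
      · have hiΛ : (patlen Nf nf c₀ i).2 ≤ Λ := pk3 i (by omega)
        have harith : (patlen Nf nf c₀ (k+1)).2 - (patlen Nf nf c₀ i).2 + y
            = m + ((Λ - (patlen Nf nf c₀ i).2) + y) := by
          rw [hL]; omega
        rw [harith, hQcopy _ (by omega)]
        exact pk5 i (by omega) y hy
      · have : i = k + 1 := by omega
        subst this
        simpa using fun _ => Iff.rfl
    · -- A6 : the junction analysis
      intro i hi x hx
      rcases Nat.lt_or_ge i (k+1) with hik | h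
      · have hik' : i ≤ k := by omega
        have hLiΛ : (patlen Nf nf c₀ i).2 ≤ Λ := pk3 i hik'
        rw [hL] at hx
        have hpi : p i = (patlen Nf nf c₀ i).1 := by
          simp only [hp]
          rw [Nat.min_eq_left hik']
        have hli : l i = (patlen Nf nf c₀ i).2 := by
          simp only [hl]
          rw [Nat.min_eq_left hik']
        by_cases c1 : x + (Nf (patlen Nf nf c₀ i).1 + 3 * (patlen Nf nf c₀ i).2 + 3)
            + (patlen Nf nf c₀ i).2 ≤ Λ
        · obtain ⟨m', h1, h2, h3, h4⟩ := pk6 i hik' x c1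
          refine ⟨m', h1, h2, by rw [hL]; omega, fun y hy => ?_⟩
          rw [hQP _ (by omega)]
          exact h4 y hy
        · push_neg at c1
          by_cases c2 : m ≤ x
          · obtain ⟨m', h1, h2, h3, h4⟩ := pk6 i hik' (x - m) (by omega)
            refine ⟨m + m', by omega, by omega, by rw [hL]; omega, fun y hy => ?_⟩
            rw [add_assoc, hQcopy _ (by omega)]
            exact h4 y hy
          · push_neg at c2
            by_cases c3 : x + (patlen Nf nf c₀ i).2 ≤ Λ
            · -- end copy of P
              refine ⟨Λ - (patlen Nf nf c₀ i).2, by omega, by omega, by rw [hL]; omega,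
                fun y hy => ?_⟩
              rw [hQP _ (by omega)]
              exact pk5 i hik' y hy
            · push_neg at c3
              by_cases c4 : x ≤ Λ
              · by_cases c5 : Λ + Nf (patlen Nf nf c₀ i).1 + (patlen Nf nf c₀ i).2 + 1 ≤ m
                · -- first copy of the fill
                  obtain ⟨m', h1, h2, h3, h4⟩ := fill_first C Nf nf p l hnf1 hCp hbdp hnf2
                    hnf3 hmonop hprep (m - Λ + k) k Λ m (by omega) i (by omega)
                    (by rw [hpi, hli]; omega)
                  rw [hpi, hli] at h4
                  rw [hpi, hli] at h2
                  rw [hli] at h3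
                  refine ⟨m', by omega, by omega, by rw [hL]; omega, fun y hy => ?_⟩
                  rw [hQfill _ (by omega) (by omega)]
                  exact h4 y hy
                · -- the main copy at m
                  refine ⟨m, by omega, by omega, by rw [hL]; omega, fun y hy => ?_⟩
                  rw [hQcopy _ (by omega)]
                  exact pk4 i hik' y hy
              · push_neg at c4
                by_cases c6 : x + (Nf (patlen Nf nf c₀ i).1 + 3 * (patlen Nf nf c₀ i).2 + 3) ≤ m
                · -- interior of the fill
                  obtain ⟨m', h1, h2, h3, h4, h5⟩ := fill_gap C Nf nf p l hnf1 hCp hbdp hnf2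
                    hnf3 hmonop hprep hendp hinsp (m - Λ + k) k Λ m (by omega) i (by omega)
                    x (by omega) (by rw [hpi, hli]; omega)
                  rw [hpi, hli] at h5
                  rw [hli] at h4
                  rw [hpi, hli] at h2
                  refine ⟨m', h1, by omega, by rw [hL]; omega, fun y hy => ?_⟩
                  rw [hQfill _ (by omega) (by omega)]
                  exact h5 y hy
                · -- the main copy at m
                  refine ⟨m, by omega, by omega, by rw [hL]; omega, fun y hy => ?_⟩
                  rw [hQcopy _ (by omega)]
                  exact pk4 i hik' y hy
      · have : i = k + 1 := by omega
        subst this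
        exfalso
        omega

end Master

section Assemble

lemma patlen_growth (Nf : Finset ℕ → ℕ) (nf : Finset ℕ → ℕ → ℕ) (c₀ : ℕ)
    (hnf1 : ∀ P a, a < nf P a) : ∀ k, k + 1 ≤ (patlen Nf nf c₀ k).2 := by
  intro k
  induction k with
  | zero => rw [patlen]; omega
  | succ k ih =>
    have h1 : (patlen Nf nf c₀ (k+1)).2
        = nf (patlen Nf nf c₀ k).1 (patlen Nf nf c₀ k).2 + (patlen Nf nf c₀ k).2 := by
      rw [patlen_succ]
    have h2 := hnf1 (patlen Nf nf c₀ k).1 (patlen Nf nf c₀ k).2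
    omega

lemma exists_D (C : Set ℕ)
    (hstar : ∀ P : Finset ℕ, (↑P : Set ℕ) ⊆ C →
      ∃ N, ∀ a : ℕ, ∃ m, a < m ∧ m ≤ a + N ∧ ∀ p ∈ P, m + p ∈ C)
    (c₀ : ℕ) (hc₀ : c₀ ∈ C) :
    ∃ D : Set ℕ, (∀ d ∈ D, d ∈ C) ∧ D.Nonempty ∧
      ∀ L, ∃ N, ∀ a : ℕ, ∃ m, a < m ∧ m ≤ a + N ∧ ∀ i < L, (m + i ∈ D ↔ i ∈ D) := by
  classical
  have hstar' : ∀ P : Finset ℕ, ∃ N : ℕ, ∀ a : ℕ, ∃ m, a < m ∧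
      ((↑P : Set ℕ) ⊆ C → (m ≤ a + N ∧ ∀ p ∈ P, m + p ∈ C)) := by
    intro P
    by_cases hP : (↑P : Set ℕ) ⊆ C
    · obtain ⟨N, hN⟩ := hstar P hP
      refine ⟨N, fun a => ?_⟩
      obtain ⟨m, h1, h2, h3⟩ := hN a
      exact ⟨m, h1, fun _ => ⟨h2, h3⟩⟩
    · exact ⟨0, fun a => ⟨a + 1, by omega, fun h => absurd h hP⟩⟩
  choose Nf hNf using hstar'
  choose nf hnf1 hnf23 using hNf
  have hnf2 : ∀ (P : Finset ℕ) (a : ℕ), (↑P : Set ℕ) ⊆ C → nf P a ≤ a + Nf P :=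
    fun P a h => (hnf23 P a h).1
  have hnf3 : ∀ (P : Finset ℕ) (a : ℕ), (↑P : Set ℕ) ⊆ C → ∀ p ∈ P, nf P a + p ∈ C :=
    fun P a h => (hnf23 P a h).2
  have hpack := pack_all Nf nf c₀ C hnf1 hnf2 hnf3 hc₀
  set D : Set ℕ := {n | ∃ k, n ∈ (patlen Nf nf c₀ k).1} with hD
  have hgrow := patlen_growth Nf nf c₀ hnf1
  have hprefD : ∀ k y, y < (patlen Nf nf c₀ k).2 →
      (y ∈ D ↔ y ∈ (patlen Nf nf c₀ k).1) := by
    intro k y hy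
    constructor
    · rintro ⟨t, ht⟩
      rcases le_or_gt t k with h | h
      · have h2 := (hpack t).2.1 y ht
        exact ((hpack k).2.2.2.1 t h y h2).mpr ht
      · exact ((hpack t).2.2.2.1 k (by omega) y hy).mp ht
    · intro h
      exact ⟨k, h⟩
  refine ⟨D, ?_, ⟨c₀, ⟨0, by rw [patlen]; simp⟩⟩, ?_⟩
  · rintro d ⟨t, ht⟩
    exact (hpack t).1 ht
  · intro L
    refine ⟨(Nf (patlen Nf nf c₀ L).1 + 3 * (patlen Nf nf c₀ L).2 + 3) + 1, fun a => ?_⟩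
    set k := L + a + 2 + (Nf (patlen Nf nf c₀ L).1 + 3 * (patlen Nf nf c₀ L).2 + 3)
      + (patlen Nf nf c₀ L).2 with hk
    have hgk := hgrow k
    have hgL := hgrow L
    obtain ⟨m, h1, h2, h3, h4⟩ := (hpack k).2.2.2.2.2 L (by omega) (a + 1) (by omega)
    refine ⟨m, by omega, by omega, fun i hi => ?_⟩
    have hiL : i < (patlen Nf nf c₀ L).2 := by omega
    rw [hprefD k (m + i) (by omega), hprefD L i hiL]
    exact h4 i hiL

end Assemble

theorem dynThick_iff_complement_characterization (A : Set ℕ) :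
    DynThick A ↔
      ∀ B : Set ℕ, A ⊆ B → B ≠ Set.univ →
        ∃ F : Finset ℕ, (∀ f ∈ F, f ∉ B) ∧ Thick (⋃ f ∈ F, NSub B f) := by
  constructor
  · intro hdt
    by_contra hcon
    push_neg at hcon
    obtain ⟨B, hAB, hBu, hF⟩ := hcon
    have hstar : ∀ P : Finset ℕ, (↑P : Set ℕ) ⊆ Bᶜ →
        ∃ N, ∀ a : ℕ, ∃ m, a < m ∧ m ≤ a + N ∧ ∀ p ∈ P, m + p ∈ Bᶜ := by
      intro P hP
      have hPB : ∀ f ∈ P, f ∉ B := fun f hf => hP (Finset.mem_coe.mpr hf)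
      have hnt := hF P hPB
      rw [Thick] at hnt
      push_neg at hnt
      obtain ⟨E, hE⟩ := hnt
      refine ⟨E.sup id + 1, fun a => ?_⟩
      obtain ⟨f, hfE, hfn⟩ := hE (a + 1) (by omega)
      refine ⟨f + (a + 1), by omega, ?_, ?_⟩
      · have : f ≤ E.sup id := Finset.le_sup (f := id) hfE
        omega
      · intro p hp
        rw [Set.mem_compl_iff]
        intro hmem
        apply hfn
        simp only [Set.mem_iUnion]
        exact ⟨p, hp, ⟨by omega, hmem⟩⟩
    obtain ⟨c₀, hc₀⟩ := Set.ne_univ_iff_exists_notMem B |>.mp hBu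
    obtain ⟨D, hDC, hDne, hsyn⟩ := exists_D Bᶜ hstar c₀ (Set.mem_compl_iff B c₀ |>.mpr hc₀)
    exact (hard_core A B hAB hdt D (fun d hd => Set.mem_compl_iff B d |>.mp (hDC d hd))
      hDne hsyn).elim
  · exact easy_dir A
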